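/- Let M ≥ 1, let x₁,…,x_M ∈ ℝ³, let ρ₁,…,ρ_M > 0 and let r₀ ≥ 0. Set Ω_SAS = ⋃_{i=1}^M closedBall(xᵢ, ρᵢ) and let f_SAS be the signed distance function to Ω_SAS. Then the enlarged cavity {x ∈ ℝ³ : f_SAS(x) ≤ r₀} is exactly the union of the enlarged balls: {x ∈ ℝ³ : f_SAS(x) ≤ r₀} = ⋃_{i=1}^M closedBall(xᵢ, ρᵢ + r₀). -/

import Mathlib

/-- For the SAS cavity `Ω = ⋃ᵢ closedBall (xᵢ) ρᵢ` (with `ρᵢ > 0`) and the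
signed distance function `f y = infDist y Ω - infDist y Ωᶜ`, the enlarged cavity
`{y : f y ≤ r₀}` (with `r₀ ≥ 0`) is exactly the union of the enlarged balls. -/
theorem enlarged_cavity_eq_union_enlarged_balls
    (M : ℕ) (hM : 1 ≤ M)
    (x : Fin M → EuclideanSpace ℝ (Fin 3))
    (ρ : Fin M → ℝ) (hρ : ∀ i, 0 < ρ i)
    (r₀ : ℝ) (hr₀ : 0 ≤ r₀)
    (Ω : Set (EuclideanSpace ℝ (Fin 3)))
    (hΩ : Ω = ⋃ i, Metric.closedBall (x i) (ρ i))
    (f : EuclideanSpace ℝ (Fin 3) → ℝ)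
    (hf : ∀ y, f y = Metric.infDist y Ω - Metric.infDist y Ωᶜ) :
    {y : EuclideanSpace ℝ (Fin 3) | f y ≤ r₀}
      = ⋃ i, Metric.closedBall (x i) (ρ i + r₀) := by
  have hΩclosed : IsClosed Ω := by
    rw [hΩ]
    exact isClosed_iUnion_of_finite fun i => Metric.isClosed_closedBall
  have i0 : Fin M := ⟨0, hM⟩
  have hne : Ω.Nonempty := ⟨x i0, by
    rw [hΩ]; exact Set.mem_iUnion.2 ⟨i0, Metric.mem_closedBall_self (hρ i0).le⟩⟩
  ext y
  simp only [Set.mem_setOf_eq, Set.mem_iUnion, Metric.mem_closedBall, hf]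
  constructor
  · intro hy
    by_cases hyΩ : y ∈ Ω
    · rw [hΩ] at hyΩ
      obtain ⟨i, hi⟩ := Set.mem_iUnion.1 hyΩ
      exact ⟨i, le_trans (Metric.mem_closedBall.1 hi) (by linarith [hr₀])⟩
    · have hc : Metric.infDist y Ωᶜ = 0 := Metric.infDist_zero_of_mem hyΩ
      rw [hc, sub_zero] at hy
      obtain ⟨z, hzΩ, hz⟩ := hΩclosed.exists_infDist_eq_dist hne y
      rw [hΩ] at hzΩ
      obtain ⟨i, hi⟩ := Set.mem_iUnion.1 hzΩ
      refine ⟨i, ?_⟩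
      calc dist y (x i) ≤ dist y z + dist z (x i) := dist_triangle _ _ _
        _ ≤ r₀ + ρ i := add_le_add (hz ▸ hy) (Metric.mem_closedBall.1 hi)
        _ = ρ i + r₀ := by ring
  · rintro ⟨i, hi⟩
    have hc0 : 0 ≤ Metric.infDist y Ωᶜ := Metric.infDist_nonneg
    by_cases hyΩ : y ∈ Ω
    · have : Metric.infDist y Ω = 0 := Metric.infDist_zero_of_mem hyΩ
      linarith
    · have hc : Metric.infDist y Ωᶜ = 0 := Metric.infDist_zero_of_mem hyΩ
      rw [hc, sub_zero]
      -- y is outside the ball around x i, so dist y (x i) > ρ i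
      have hd : ρ i < dist y (x i) := by
        by_contra h
        exact hyΩ (hΩ ▸ Set.mem_iUnion.2 ⟨i, Metric.mem_closedBall.2 (not_lt.1 h)⟩)
      set d := dist y (x i) with hdd
      have hdpos : 0 < d := lt_trans (hρ i) hd
      -- project y onto the sphere of radius ρ i around x i
      set z : EuclideanSpace ℝ (Fin 3) := x i + (ρ i / d) • (y - x i) with hzdef
      have hzy : dist y z = d - ρ i := by
        have : y - z = (1 - ρ i / d) • (y - x i) := by
          rw [hzdef]; module
        rw [dist_eq_norm, this, norm_smul, Real.norm_eq_abs,
          abs_of_nonneg (by rw [sub_nonneg]; exact div_le_one_of_le₀ hd.le hdpos.le)]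
        have : ‖y - x i‖ = d := by rw [hdd, dist_eq_norm]
        rw [this]
        field_simp
      have hzΩ : z ∈ Ω := by
        rw [hΩ]
        refine Set.mem_iUnion.2 ⟨i, Metric.mem_closedBall.2 ?_⟩
        have : z - x i = (ρ i / d) • (y - x i) := by rw [hzdef]; module
        rw [dist_eq_norm, this, norm_smul, Real.norm_eq_abs,
          abs_of_nonneg (div_nonneg (hρ i).le hdpos.le)]
        have h1 : ‖y - x i‖ = d := by rw [hdd, dist_eq_norm]
        rw [h1]
        field_simp
        exact le_rfl
      calc Metric.infDist y Ω ≤ dist y z := Metric.infDist_le_dist_of_mem hzΩ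
        _ = d - ρ i := hzy
        _ ≤ r₀ := by linarith
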